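/- Let $E$ be a topological graph in which both $r, s : E^1 \to E^0$ are finite-to-one covering maps and $E^0$ is locally contractible. Then the geometric realization $R(E)$ is locally contractible. -/

import Mathlib

/-- A space is locally contractible if every point has a neighborhood base of
contractible neighborhoods. -/
def LocallyContractibleSpace' (X : Type*) [TopologicalSpace X] : Prop :=
  ∀ x : X, ∀ U ∈ nhds x, ∃ V ∈ nhds x, V ⊆ U ∧ ContractibleSpace V

/-- The gluing relation defining the geometric realization `R(E)` of a topological graph:
`(e,0)` is identified with `s e` and `(e,1)` with `r e`. -/
inductive glueRel {E0 E1 : Type*} (s r : E1 → E0) :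
    (E1 × unitInterval) ⊕ E0 → (E1 × unitInterval) ⊕ E0 → Prop
  | src (e : E1) : glueRel s r (Sum.inl (e, 0)) (Sum.inr (s e))
  | rng (e : E1) : glueRel s r (Sum.inl (e, 1)) (Sum.inr (r e))

namespace Stmt9Aux

open Set Filter Topology unitInterval

variable {E0 E1 : Type*} [TopologicalSpace E0] [TopologicalSpace E1] (s r : E1 → E0)

/-- abbreviation for the total space before gluing -/
abbrev XT (E0 E1 : Type*) := (E1 × unitInterval) ⊕ E0

def qm : XT E0 E1 → Quot (glueRel s r) := Quot.mk _

lemma continuous_qm : Continuous (qm s r) := continuous_quot_mk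

lemma qm_src (e : E1) : qm s r (Sum.inl (e, 0)) = qm s r (Sum.inr (s e)) :=
  Quot.sound (glueRel.src e)

lemma qm_rng (e : E1) : qm s r (Sum.inl (e, 1)) = qm s r (Sum.inr (r e)) :=
  Quot.sound (glueRel.rng e)

/-- saturation condition for subsets of the total space -/
def Sat (O : Set (XT E0 E1)) : Prop :=
  ∀ e : E1, (Sum.inl (e, (0 : unitInterval)) ∈ O ↔ Sum.inr (s e) ∈ O) ∧
    (Sum.inl (e, (1 : unitInterval)) ∈ O ↔ Sum.inr (r e) ∈ O)

lemma sat_preimage (A : Set (Quot (glueRel s r))) : Sat s r (qm s r ⁻¹' A) := by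
  intro e
  constructor
  · rw [mem_preimage, mem_preimage, qm_src]
  · rw [mem_preimage, mem_preimage, qm_rng]

lemma sat_eqvGen {O : Set (XT E0 E1)} (hO : Sat s r O) :
    ∀ {a b}, Relation.EqvGen (glueRel s r) a b → (a ∈ O ↔ b ∈ O) := by
  intro a b h
  induction h with
  | rel a b hab =>
    cases hab with
    | src e => exact (hO e).1
    | rng e => exact (hO e).2
  | refl a => exact Iff.rfl
  | symm a b _ ih => exact ih.symm
  | trans a b c _ _ ih1 ih2 => exact ih1.trans ih2

lemma mem_image_sat {O : Set (XT E0 E1)} (hO : Sat s r O) {z : XT E0 E1} :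
    qm s r z ∈ qm s r '' O ↔ z ∈ O := by
  constructor
  · rintro ⟨y, hy, hq⟩
    exact (sat_eqvGen s r hO (Quot.eqvGen_exact hq)).mp hy
  · exact fun h => ⟨z, h, rfl⟩

lemma preimage_image_sat {O : Set (XT E0 E1)} (hO : Sat s r O) :
    qm s r ⁻¹' (qm s r '' O) = O := by
  ext z
  rw [mem_preimage]
  exact mem_image_sat s r hO

lemma isOpen_image_sat {O : Set (XT E0 E1)} (hO : Sat s r O) (h : IsOpen O) :
    IsOpen (qm s r '' O) := by
  rw [← isQuotientMap_quot_mk.isOpen_preimage]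
  show IsOpen (qm s r ⁻¹' _)
  rw [preimage_image_sat s r hO]
  exact h

lemma image_inter_sat {O B : Set (XT E0 E1)} (hO : Sat s r O) :
    qm s r '' O ∩ qm s r '' B = qm s r '' (O ∩ B) := by
  ext y
  constructor
  · rintro ⟨⟨o, ho, rfl⟩, b, hb, hq⟩
    exact ⟨b, ⟨(sat_eqvGen s r hO (Quot.eqvGen_exact hq)).mpr ho, hb⟩, hq⟩
  · rintro ⟨z, ⟨hzO, hzB⟩, rfl⟩
    exact ⟨⟨z, hzO, rfl⟩, ⟨z, hzB, rfl⟩⟩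

/-- points in the interior of an edge -/
def IsMid : XT E0 E1 → Prop := fun x =>
  match x with
  | Sum.inl p => 0 < (p.2 : ℝ) ∧ (p.2 : ℝ) < 1
  | Sum.inr _ => False

lemma eqvGen_mid {a b : XT E0 E1} (h : Relation.EqvGen (glueRel s r) a b) :
    (IsMid a → b = a) ∧ (IsMid b → a = b) := by
  induction h with
  | rel a b hab =>
    cases hab with
    | src e =>
      refine ⟨fun h => absurd h.1 ?_, fun h => h.elim⟩
      show ¬((0:ℝ) < ((0 : unitInterval) : ℝ))
      norm_num
    | rng e =>
      refine ⟨fun h => absurd h.2 ?_, fun h => h.elim⟩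
      show ¬(((1 : unitInterval) : ℝ) < 1)
      norm_num
  | refl a => exact ⟨fun _ => rfl, fun _ => rfl⟩
  | symm a b _ ih => exact ⟨ih.2, ih.1⟩
  | trans a b c _ _ ih1 ih2 =>
    constructor
    · intro ha
      have hba := ih1.1 ha
      have : IsMid b := hba ▸ ha
      exact (ih2.1 this).trans hba
    · intro hc
      have hbc := ih2.2 hc
      have : IsMid b := by rw [hbc]; exact hc
      exact (ih1.2 this).trans hbc

lemma qm_inj_mid {a b : XT E0 E1} (ha : IsMid a) (h : qm s r a = qm s r b) : b = a :=
  (eqvGen_mid s r (Quot.eqvGen_exact h)).1 ha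

end Stmt9Aux
set_option linter.unusedSectionVars false

namespace Stmt9Aux

open Set Filter Topology unitInterval

variable {E0 E1 : Type*} [TopologicalSpace E0] [TopologicalSpace E1] (s r : E1 → E0)

/-- basic collar neighborhoods -/
def Bcol (D : Set E0) (δ : ℝ) : Set (XT E0 E1) :=
  Sum.elim (fun p : E1 × unitInterval =>
    (s p.1 ∈ D ∧ (p.2 : ℝ) < δ) ∨ (r p.1 ∈ D ∧ 1 - δ < (p.2 : ℝ)))
    (fun w => w ∈ D)

lemma mem_bcol_inl {D : Set E0} {δ : ℝ} {e : E1} {t : unitInterval} :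
    Sum.inl (e, t) ∈ Bcol s r D δ ↔
      (s e ∈ D ∧ (t : ℝ) < δ) ∨ (r e ∈ D ∧ 1 - δ < (t : ℝ)) := Iff.rfl

lemma mem_bcol_inr {D : Set E0} {δ : ℝ} {w : E0} :
    Sum.inr w ∈ Bcol s r D δ ↔ w ∈ D := Iff.rfl

lemma bcol_sat {D : Set E0} {δ : ℝ} (hδ0 : 0 < δ) (hδ1 : δ < 1) : Sat s r (Bcol s r D δ) := by
  intro e
  constructor
  · rw [mem_bcol_inl, mem_bcol_inr]
    constructor
    · rintro (⟨h, _⟩ | ⟨_, h⟩)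
      · exact h
      · exfalso
        have : ((0 : unitInterval) : ℝ) = 0 := rfl
        rw [this] at h; linarith
    · intro h
      exact Or.inl ⟨h, by show (((0:unitInterval)):ℝ) < δ; exact hδ0⟩
  · rw [mem_bcol_inl, mem_bcol_inr]
    constructor
    · rintro (⟨_, h⟩ | ⟨h, _⟩)
      · exfalso
        have h1 : ((1 : unitInterval) : ℝ) = 1 := rfl
        rw [h1] at h; linarith
      · exact h
    · intro h
      refine Or.inr ⟨h, by rw [show ((1:unitInterval):ℝ) = 1 from rfl]; linarith⟩

lemma bcol_isOpen (hcs : Continuous s) (hcr : Continuous r) {D : Set E0} {δ : ℝ}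
    (hD : IsOpen D) : IsOpen (Bcol s r D δ) := by
  rw [isOpen_sum_iff]
  constructor
  · have : Sum.inl ⁻¹' (Bcol s r D δ) =
        ((fun p : E1 × unitInterval => s p.1) ⁻¹' D ∩
          (fun p : E1 × unitInterval => (p.2 : ℝ)) ⁻¹' Iio δ) ∪
        ((fun p : E1 × unitInterval => r p.1) ⁻¹' D ∩
          (fun p : E1 × unitInterval => (p.2 : ℝ)) ⁻¹' Ioi (1 - δ)) := by
      ext ⟨e, t⟩
      show ((s e ∈ D ∧ (t:ℝ) < δ) ∨ (r e ∈ D ∧ 1 - δ < (t:ℝ))) ↔ _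
      simp only [mem_union, mem_inter_iff, mem_preimage, mem_Iio, mem_Ioi]
    rw [this]
    have hc2 : Continuous fun p : E1 × unitInterval => (p.2 : ℝ) :=
      continuous_subtype_val.comp continuous_snd
    exact (((hcs.comp continuous_fst).isOpen_preimage _ hD).inter
        (hc2.isOpen_preimage _ isOpen_Iio)).union
      (((hcr.comp continuous_fst).isOpen_preimage _ hD).inter
        (hc2.isOpen_preimage _ isOpen_Ioi))
  · show IsOpen (Sum.inr ⁻¹' _)
    have : Sum.inr ⁻¹' (Bcol s r D δ) = D := rfl
    rw [this]; exact hD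

lemma bcol_mono {D D' : Set E0} {δ δ' : ℝ} (hD : D ⊆ D') (hδ : δ ≤ δ') :
    Bcol s r D δ ⊆ Bcol s r D' δ' := by
  rintro (⟨e, t⟩ | w) h
  · rcases h with ⟨h1, h2⟩ | ⟨h1, h2⟩
    · exact Or.inl ⟨hD h1, lt_of_lt_of_le h2 hδ⟩
    · exact Or.inr ⟨hD h1, by linarith⟩
  · exact hD h

/-- downward and upward slides on the unit interval -/
noncomputable def sldn (t u : unitInterval) : unitInterval :=
  ⟨(1 - (u : ℝ)) * (t : ℝ), by
    constructor
    · exact mul_nonneg (by linarith [u.2.2]) t.2.1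
    · nlinarith [t.2.1, t.2.2, u.2.1, u.2.2]⟩

noncomputable def slup (t u : unitInterval) : unitInterval :=
  ⟨(t : ℝ) + (u : ℝ) * (1 - (t : ℝ)), by
    constructor
    · nlinarith [t.2.1, t.2.2, u.2.1, u.2.2]
    · nlinarith [t.2.1, t.2.2, u.2.1, u.2.2]⟩

noncomputable def slide0 : XT E0 E1 → unitInterval → XT E0 E1
  | Sum.inl p, u => Sum.inl (p.1, if (p.2 : ℝ) ≤ 1/2 then sldn p.2 u else slup p.2 u)
  | Sum.inr w, _ => Sum.inr w

lemma slide0_inl (e : E1) (t u : unitInterval) :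
    slide0 (E0 := E0) (Sum.inl (e, t)) u =
      Sum.inl (e, if (t : ℝ) ≤ 1/2 then sldn t u else slup t u) := rfl

lemma slide0_zero (z : XT E0 E1) : slide0 z 0 = z := by
  cases z with
  | inl p =>
    obtain ⟨e, t⟩ := p
    rw [slide0_inl]
    by_cases h : (t : ℝ) ≤ 1/2
    · rw [if_pos h]
      congr 1
      exact congrArg _ (Subtype.ext (by show (1 - ((0:unitInterval):ℝ)) * t = (t:ℝ); norm_num))
    · rw [if_neg h]
      congr 1
      exact congrArg _ (Subtype.ext (by show (t:ℝ) + ((0:unitInterval):ℝ) * (1 - t) = (t:ℝ); norm_num))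
  | inr w => rfl

noncomputable def Sl : Quot (glueRel s r) → unitInterval → Quot (glueRel s r) :=
  Quot.lift (fun z u' => qm s r (slide0 z u')) (by
    rintro a b (⟨e⟩ | ⟨e⟩)
    · funext u
      have h2 : slide0 (E0 := E0) (Sum.inl (e, 0)) u = Sum.inl (e, (0 : unitInterval)) := by
        rw [slide0_inl, if_pos (by norm_num : (((0:unitInterval)):ℝ) ≤ 1/2)]
        congr 1
        exact congrArg _ (Subtype.ext (by show (1 - (u:ℝ)) * ((0:unitInterval):ℝ) = ((0:unitInterval):ℝ); norm_num))
      show qm s r (slide0 (Sum.inl (e, 0)) u) = qm s r (Sum.inr (s e))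
      rw [h2]; exact qm_src s r e
    · funext u
      have h2 : slide0 (E0 := E0) (Sum.inl (e, 1)) u = Sum.inl (e, (1 : unitInterval)) := by
        rw [slide0_inl, if_neg (by norm_num : ¬(((1:unitInterval)):ℝ) ≤ 1/2)]
        congr 1
        refine congrArg _ (Subtype.ext ?_)
        show ((1:unitInterval):ℝ) + (u:ℝ) * (1 - ((1:unitInterval):ℝ)) = ((1:unitInterval):ℝ)
        norm_num
      show qm s r (slide0 (Sum.inl (e, 1)) u) = qm s r (Sum.inr (r e))
      rw [h2]; exact qm_rng s r e)

lemma Sl_mk (z : XT E0 E1) (u : unitInterval) :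
    Sl s r (qm s r z) u = qm s r (slide0 z u) := rfl

lemma Sl_zero (n : Quot (glueRel s r)) : Sl s r n 0 = n := by
  induction n using Quot.ind with
  | _ z => exact congrArg (qm s r) (slide0_zero z)

/-- projection to the base -/
noncomputable def pbar0 : XT E0 E1 → E0
  | Sum.inl p => if (p.2 : ℝ) ≤ 1/2 then s p.1 else r p.1
  | Sum.inr w => w

noncomputable def Pbar : Quot (glueRel s r) → E0 :=
  Quot.lift (pbar0 s r) (by
    rintro a b (⟨e⟩ | ⟨e⟩)
    · show (if (((0:unitInterval)):ℝ) ≤ 1/2 then s e else r e) = s e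
      rw [if_pos (by norm_num : (((0:unitInterval)):ℝ) ≤ 1/2)]
    · show (if (((1:unitInterval)):ℝ) ≤ 1/2 then s e else r e) = r e
      rw [if_neg (by norm_num : ¬(((1:unitInterval)):ℝ) ≤ 1/2)])

lemma Pbar_mk (z : XT E0 E1) : Pbar s r (qm s r z) = pbar0 s r z := rfl

lemma Sl_one (n : Quot (glueRel s r)) : Sl s r n 1 = qm s r (Sum.inr (Pbar s r n)) := by
  induction n using Quot.ind with
  | _ z =>
    show qm s r (slide0 z 1) = qm s r (Sum.inr (pbar0 s r z))
    cases z with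
    | inl p =>
      obtain ⟨e, t⟩ := p
      rw [slide0_inl]
      by_cases h : (t : ℝ) ≤ 1/2
      · rw [if_pos h]
        have : sldn t 1 = 0 := Subtype.ext (by show (1 - ((1:unitInterval):ℝ)) * (t:ℝ) = ((0:unitInterval):ℝ); norm_num)
        rw [this]
        show qm s r (Sum.inl (e, 0)) = _
        rw [qm_src]
        congr 1
        show Sum.inr (s e) = Sum.inr (if (t:ℝ) ≤ 1/2 then s e else r e)
        rw [if_pos h]
      · rw [if_neg h]
        have : slup t 1 = 1 := Subtype.ext (by
          show (t:ℝ) + ((1:unitInterval):ℝ) * (1 - (t:ℝ)) = ((1:unitInterval):ℝ)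
          show (t:ℝ) + 1 * (1 - (t:ℝ)) = 1
          ring)
        rw [this]
        show qm s r (Sum.inl (e, 1)) = _
        rw [qm_rng]
        congr 1
        show Sum.inr (r e) = Sum.inr (if (t:ℝ) ≤ 1/2 then s e else r e)
        rw [if_neg h]
    | inr w => rfl

lemma slide_stable {D : Set E0} {δ : ℝ} (hδ0 : 0 < δ) (hδh : δ ≤ 1/2) {z : XT E0 E1}
    (hz : z ∈ Bcol s r D δ) (u : unitInterval) : slide0 z u ∈ Bcol s r D δ := by
  cases z with
  | inr w => exact hz
  | inl p =>
    obtain ⟨e, t⟩ := p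
    rw [slide0_inl]
    by_cases h : (t : ℝ) ≤ 1/2
    · rw [if_pos h]
      rcases hz with ⟨hD, ht⟩ | ⟨hD, ht⟩
      · exact Or.inl ⟨hD, by
          show (1 - (u:ℝ)) * (t:ℝ) < δ
          nlinarith [t.2.1, u.2.1, u.2.2]⟩
      · exfalso; linarith
    · rw [if_neg h]
      rcases hz with ⟨hD, ht⟩ | ⟨hD, ht⟩
      · exfalso; linarith
      · exact Or.inr ⟨hD, by
          show 1 - δ < (t:ℝ) + (u:ℝ) * (1 - (t:ℝ))
          nlinarith [t.2.2, u.2.1]⟩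

lemma pbar_mem {C : Set E0} {ε : ℝ} (hεh : ε ≤ 1/2) {z : XT E0 E1}
    (hz : z ∈ Bcol s r C ε) : pbar0 s r z ∈ C := by
  cases z with
  | inr w => exact hz
  | inl p =>
    obtain ⟨e, t⟩ := p
    rcases hz with ⟨hC, ht⟩ | ⟨hC, ht⟩
    · show (if (t:ℝ) ≤ 1/2 then s e else r e) ∈ C
      rw [if_pos (by linarith)]; exact hC
    · show (if (t:ℝ) ≤ 1/2 then s e else r e) ∈ C
      rw [if_neg (by intro hle; linarith)]; exact hC

end Stmt9Aux
namespace Stmt9Aux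

open Set Filter Topology unitInterval

variable {E0 E1 : Type*} [TopologicalSpace E0] [TopologicalSpace E1] (s r : E1 → E0)

lemma I_window {t : unitInterval} {J : Set unitInterval} (hJ : J ∈ 𝓝 t) :
    ∃ η > 0, ∀ t' : unitInterval, |(t' : ℝ) - (t : ℝ)| < η → t' ∈ J := by
  obtain ⟨η, hη0, hball⟩ := Metric.mem_nhds_iff.mp hJ
  refine ⟨η, hη0, fun t' ht' => hball ?_⟩
  rw [Metric.mem_ball, Subtype.dist_eq, Real.dist_eq]
  exact ht'

lemma isOpen_I_lt (c : ℝ) : IsOpen {t' : unitInterval | (t' : ℝ) < c} :=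
  continuous_subtype_val.isOpen_preimage _ isOpen_Iio

lemma isOpen_I_gt (c : ℝ) : IsOpen {t' : unitInterval | c < (t' : ℝ)} :=
  continuous_subtype_val.isOpen_preimage _ isOpen_Ioi

lemma isOpen_I_abs (c θ : ℝ) : IsOpen {t' : unitInterval | |(t' : ℝ) - c| < θ} :=
  ((continuous_subtype_val.sub continuous_const).abs).isOpen_preimage _ isOpen_Iio

lemma rect_mem {O : Set (XT E0 E1)} (hO : IsOpen O) {e : E1} {t : unitInterval}
    (h : Sum.inl (e, t) ∈ O) :
    ∃ W, IsOpen W ∧ e ∈ W ∧ ∃ η > 0,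
      ∀ e' ∈ W, ∀ t' : unitInterval, |(t' : ℝ) - (t : ℝ)| < η → Sum.inl (e', t') ∈ O := by
  have h1 : IsOpen (Sum.inl ⁻¹' O : Set (E1 × unitInterval)) := (isOpen_sum_iff.mp hO).1
  have h2 : (Sum.inl ⁻¹' O : Set (E1 × unitInterval)) ∈ 𝓝 (e, t) := h1.mem_nhds h
  rw [mem_nhds_prod_iff] at h2
  obtain ⟨W, hW, J, hJ, hsub⟩ := h2
  obtain ⟨η, hη, hJ'⟩ := I_window hJ
  exact ⟨interior W, isOpen_interior, mem_interior_iff_mem_nhds.mpr hW, η, hη,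
    fun e' he' t' ht' => hsub ⟨interior_subset he', hJ' t' ht'⟩⟩

lemma cov_shrink {f : E1 → E0} (hf : IsCoveringMap f) (w : E0) (hfin : (f ⁻¹' {w}).Finite)
    {W : Set E1} (hW : IsOpen W) (hfib : f ⁻¹' {w} ⊆ W) :
    ∃ D, IsOpen D ∧ w ∈ D ∧ f ⁻¹' D ⊆ W := by
  classical
  by_cases hemp : IsEmpty ↥(f ⁻¹' {w})
  · obtain ⟨_, U, hwU, hUo, _, H, _⟩ := hf w
    exact ⟨U, hUo, hwU, fun e he => (IsEmpty.false (H ⟨e, he⟩).2).elim⟩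
  haveI := not_isEmpty_iff.mp hemp
  have hd := (hf w).1
  set T := (hf w).toTrivialization
  have hT : w ∈ T.baseSet := (hf w).mem_toTrivialization_baseSet
  have hfinS : Finite ↥(f ⁻¹' {w}) := hfin.to_subtype
  set D := T.baseSet ∩ ⋂ i : ↥(f ⁻¹' {w}),
    (T.baseSet ∩ {w' | T.toOpenPartialHomeomorph.symm (w', i) ∈ W}) with hD
  have hsymm_cont : ∀ i : ↥(f ⁻¹' {w}),
      ContinuousOn (fun w' => T.toOpenPartialHomeomorph.symm (w', i)) T.baseSet := by
    intro i
    apply T.toOpenPartialHomeomorph.continuousOn_symm.comp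
      (Continuous.continuousOn (continuous_id.prodMk continuous_const))
    intro w' hw'
    rw [T.target_eq]
    exact ⟨hw', mem_univ _⟩
  have hDopen : IsOpen D := by
    refine T.open_baseSet.inter (isOpen_iInter_of_finite fun i => ?_)
    exact (hsymm_cont i).isOpen_inter_preimage T.open_baseSet hW
  have hwD : w ∈ D := by
    refine ⟨hT, mem_iInter.mpr fun i => ⟨hT, ?_⟩⟩
    apply hfib
    show f (T.toOpenPartialHomeomorph.symm (w, i)) ∈ ({w} : Set E0)
    rw [T.proj_symm_apply (T.mem_target.mpr hT)]
    exact mem_singleton _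
  refine ⟨D, hDopen, hwD, fun e' he' => ?_⟩
  obtain ⟨hbase, hint⟩ := he'
  have hsrc : e' ∈ T.source := T.mem_source.mpr hbase
  have hkey : T.toOpenPartialHomeomorph.symm (f e', (T e').2) ∈ W :=
    (mem_iInter.mp hint (T e').2).2
  have heq : T.toOpenPartialHomeomorph.symm (f e', (T e').2) = e' := by
    have h1 : ((f e' : E0), ((T e').2 : ↑(f ⁻¹' {w}))) = T e' := Prod.ext (T.coe_fst hsrc).symm rfl
    rw [h1]
    exact T.toOpenPartialHomeomorph.left_inv hsrc
  rwa [heq] at hkey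

lemma collar (hs : IsCoveringMap s) (hr : IsCoveringMap r)
    (hsf : ∀ v : E0, (s ⁻¹' {v}).Finite) (hrf : ∀ v : E0, (r ⁻¹' {v}).Finite)
    {O : Set (XT E0 E1)} (hOs : Sat s r O) (hOo : IsOpen O) {w : E0} (hw : Sum.inr w ∈ O) :
    ∃ D δ, IsOpen D ∧ w ∈ D ∧ 0 < δ ∧ δ < 1/2 ∧ Bcol s r D δ ⊆ O := by
  classical
  have hfinS : Finite ↥(s ⁻¹' {w}) := (hsf w).to_subtype
  have hfinR : Finite ↥(r ⁻¹' {w}) := (hrf w).to_subtype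
  have hftS : Fintype ↥(s ⁻¹' {w}) := Fintype.ofFinite _
  have hftR : Fintype ↥(r ⁻¹' {w}) := Fintype.ofFinite _
  -- bottom data
  have hmemS : ∀ i : ↥(s ⁻¹' {w}), Sum.inl ((i : E1), (0 : unitInterval)) ∈ O := by
    intro i
    refine (hOs i).1.mpr ?_
    have : s (i : E1) = w := i.2
    rw [this]; exact hw
  have hrectS := fun i : ↥(s ⁻¹' {w}) => rect_mem hOo (hmemS i)
  choose WS hWSo hWSm ηS hrestS using hrectS
  have hηS : ∀ i, 0 < ηS i := fun i => (hrestS i).1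
  have hWS : ∀ i, ∀ e' ∈ WS i, ∀ t' : unitInterval,
      |(t' : ℝ) - ((0 : unitInterval) : ℝ)| < ηS i → Sum.inl (e', t') ∈ O :=
    fun i => (hrestS i).2
  -- top data
  have hmemR : ∀ j : ↥(r ⁻¹' {w}), Sum.inl ((j : E1), (1 : unitInterval)) ∈ O := by
    intro j
    refine (hOs j).2.mpr ?_
    have : r (j : E1) = w := j.2
    rw [this]; exact hw
  have hrectR := fun j : ↥(r ⁻¹' {w}) => rect_mem hOo (hmemR j)
  choose WR hWRo hWRm ηR hrestR using hrectR
  have hηR : ∀ j, 0 < ηR j := fun j => (hrestR j).1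
  have hWR : ∀ j, ∀ e' ∈ WR j, ∀ t' : unitInterval,
      |(t' : ℝ) - ((1 : unitInterval) : ℝ)| < ηR j → Sum.inl (e', t') ∈ O :=
    fun j => (hrestR j).2
  -- min δ
  set FS : Finset ℝ := insert (1/4 : ℝ) ((Finset.univ.image ηS) ∪ (Finset.univ.image ηR)) with hFS
  have hFSne : FS.Nonempty := ⟨1/4, Finset.mem_insert_self _ _⟩
  set δ := FS.min' hFSne with hδdef
  have hδpos : 0 < δ := by
    rw [hδdef]
    rw [Finset.lt_min'_iff]
    intro b hb
    rcases Finset.mem_insert.mp hb with hb | hb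
    · rw [hb]; norm_num
    · rcases Finset.mem_union.mp hb with hb | hb
      · obtain ⟨i, _, rfl⟩ := Finset.mem_image.mp hb; exact hηS i
      · obtain ⟨j, _, rfl⟩ := Finset.mem_image.mp hb; exact hηR j
  have hδquarter : δ ≤ 1/4 := Finset.min'_le _ _ (Finset.mem_insert_self _ _)
  have hδhalf : δ < 1/2 := by linarith
  have hδS : ∀ i, δ ≤ ηS i := fun i => Finset.min'_le _ _
    (Finset.mem_insert_of_mem (Finset.mem_union_left _ (Finset.mem_image_of_mem _ (Finset.mem_univ i))))
  have hδR : ∀ j, δ ≤ ηR j := fun j => Finset.min'_le _ _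
    (Finset.mem_insert_of_mem (Finset.mem_union_right _ (Finset.mem_image_of_mem _ (Finset.mem_univ j))))
  -- shrink bases
  obtain ⟨DS, hDSo, hwDS, hDSsub⟩ := cov_shrink hs w (hsf w)
    (isOpen_iUnion fun i => hWSo i) (fun e he => mem_iUnion.mpr ⟨⟨e, he⟩, hWSm ⟨e, he⟩⟩)
  obtain ⟨DR, hDRo, hwDR, hDRsub⟩ := cov_shrink hr w (hrf w)
    (isOpen_iUnion fun j => hWRo j) (fun e he => mem_iUnion.mpr ⟨⟨e, he⟩, hWRm ⟨e, he⟩⟩)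
  set D0 : Set E0 := Sum.inr ⁻¹' O with hD0
  have hD0o : IsOpen D0 := (isOpen_sum_iff.mp hOo).2
  refine ⟨D0 ∩ DS ∩ DR, δ, (hD0o.inter hDSo).inter hDRo, ⟨⟨hw, hwDS⟩, hwDR⟩, hδpos, hδhalf, ?_⟩
  rintro (⟨e', t'⟩ | w') hz
  · rcases hz with ⟨hD, ht⟩ | ⟨hD, ht⟩
    · obtain ⟨i, hi⟩ := mem_iUnion.mp (hDSsub hD.1.2)
      refine hWS i e' hi t' ?_
      have h0 : ((0 : unitInterval) : ℝ) = 0 := rfl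
      rw [h0, sub_zero, abs_of_nonneg t'.2.1]
      exact lt_of_lt_of_le ht (hδS i)
    · obtain ⟨j, hj⟩ := mem_iUnion.mp (hDRsub hD.2)
      refine hWR j e' hj t' ?_
      have h1 : ((1 : unitInterval) : ℝ) = 1 := rfl
      rw [h1, abs_sub_comm, abs_of_nonneg (by linarith [t'.2.2] : (0:ℝ) ≤ 1 - (t' : ℝ))]
      have := hδR j
      linarith
  · exact hz.1.1

lemma inl_img_open_sat {S : Set (E1 × unitInterval)} (hSo : IsOpen S)
    (hS : ∀ p ∈ S, 0 < (p.2 : ℝ) ∧ (p.2 : ℝ) < 1) :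
    IsOpen (Sum.inl '' S : Set (XT E0 E1)) ∧ Sat s r (Sum.inl '' S) := by
  constructor
  · rw [isOpen_sum_iff]
    constructor
    · rw [preimage_image_eq _ Sum.inl_injective]
      exact hSo
    · have : (Sum.inr ⁻¹' (Sum.inl '' S : Set (XT E0 E1)) : Set E0) = ∅ := by
        ext w
        simp only [mem_preimage, mem_image, mem_empty_iff_false, iff_false]
        rintro ⟨p, _, h⟩
        exact Sum.inl_ne_inr h
      rw [this]; exact isOpen_empty
  · intro e
    constructor
    · constructor
      · rintro ⟨p, hp, heq⟩
        exfalso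
        obtain rfl : p = (e, (0 : unitInterval)) := Sum.inl_injective heq
        exact absurd (hS _ hp).1 (by norm_num)
      · rintro ⟨p, _, h⟩
        exact absurd h (by simp)
    · constructor
      · rintro ⟨p, hp, heq⟩
        exfalso
        obtain rfl : p = (e, (1 : unitInterval)) := Sum.inl_injective heq
        exact absurd (hS _ hp).2 (by norm_num)
      · rintro ⟨p, _, h⟩
        exact absurd h (by simp)

end Stmt9Aux
namespace Stmt9Aux

open Set Filter Topology unitInterval

variable {E0 E1 : Type*} [TopologicalSpace E0] [TopologicalSpace E1] (s r : E1 → E0)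

lemma sl_core (hs : IsCoveringMap s) (hr : IsCoveringMap r)
    (hsf : ∀ v : E0, (s ⁻¹' {v}).Finite) (hrf : ∀ v : E0, (r ⁻¹' {v}).Finite)
    {C : Set E0} {ε : ℝ} (hεh : ε < 1/2)
    {z : XT E0 E1} (hz : z ∈ Bcol s r C ε) (u : unitInterval)
    {A' : Set (Quot (glueRel s r))} (hA'o : IsOpen A')
    (hm : qm s r (slide0 z u) ∈ A') :
    ∃ O J, IsOpen O ∧ Sat s r O ∧ z ∈ O ∧ J ∈ 𝓝 u ∧
      ∀ z' ∈ O, ∀ u' ∈ J, qm s r (slide0 z' u') ∈ A' := by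
  classical
  have hO₀s : Sat s r (qm s r ⁻¹' A') := sat_preimage s r A'
  have hO₀o : IsOpen (qm s r ⁻¹' A') := hA'o.preimage (continuous_qm s r)
  cases z with
  | inr w =>
    have hinr : Sum.inr w ∈ qm s r ⁻¹' A' := hm
    obtain ⟨D, δ, hDo, hwD, hδ0, hδh2, hDsub⟩ := collar s r hs hr hsf hrf hO₀s hO₀o hinr
    refine ⟨Bcol s r D δ, univ, bcol_isOpen s r hs.continuous hr.continuous hDo,
      bcol_sat s r hδ0 (by linarith), hwD, univ_mem, fun z' hz' u' _ => ?_⟩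
    exact hDsub (slide_stable s r hδ0 (le_of_lt hδh2) hz' u')
  | inl p =>
    obtain ⟨e, t⟩ := p
    rcases hz with ⟨heC, htε⟩ | ⟨heC, htε⟩
    · -- BOTTOM collar point
      have hth : (t : ℝ) ≤ 1/2 := by linarith
      have hsl : slide0 (E0 := E0) (Sum.inl (e, t)) u = Sum.inl (e, sldn t u) := by
        rw [slide0_inl, if_pos hth]
      rw [hsl] at hm
      have hm' : Sum.inl (e, sldn t u) ∈ qm s r ⁻¹' A' := hm
      rcases eq_or_lt_of_le t.2.1 with ht0 | ht0
      · -- t = 0 : vertex-like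
        have h0 : sldn t u = 0 := Subtype.ext (by
          show (1 - (u : ℝ)) * (t : ℝ) = ((0 : unitInterval) : ℝ)
          rw [show ((0 : unitInterval) : ℝ) = 0 from rfl, ← ht0]; ring)
        rw [h0] at hm'
        have hinr : Sum.inr (s e) ∈ qm s r ⁻¹' A' := (hO₀s e).1.mp hm'
        obtain ⟨D, δ, hDo, hwD, hδ0, hδh2, hDsub⟩ := collar s r hs hr hsf hrf hO₀s hO₀o hinr
        refine ⟨Bcol s r D δ, univ, bcol_isOpen s r hs.continuous hr.continuous hDo,
          bcol_sat s r hδ0 (by linarith), Or.inl ⟨hwD, by rw [← ht0]; exact hδ0⟩,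
          univ_mem, fun z' hz' u' _ => ?_⟩
        exact hDsub (slide_stable s r hδ0 (le_of_lt hδh2) hz' u')
      · -- 0 < t
        by_cases hu1 : (1 - (u : ℝ)) * (t : ℝ) = 0
        · -- slid all the way to 0
          have h0 : sldn t u = 0 := Subtype.ext hu1
          rw [h0] at hm'
          obtain ⟨W, hWo, heW, η, hη0, hWsub⟩ := rect_mem hO₀o hm'
          have h2t : 0 < 2 * (t : ℝ) := by linarith
          refine ⟨Sum.inl '' (W ×ˢ {t' : unitInterval |
              0 < (t' : ℝ) ∧ (t' : ℝ) < min (2 * (t : ℝ)) (1/2)}),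
            {u' : unitInterval | 1 - η / (2 * (t : ℝ)) < (u' : ℝ)}, ?_, ?_, ?_, ?_, ?_⟩
          · exact (inl_img_open_sat s r
              (hWo.prod ((isOpen_I_gt 0).inter (isOpen_I_lt _)))
              (fun p hp => by
                obtain ⟨h1, h2⟩ := hp.2
                simp only [mem_setOf_eq] at h1 h2
                have h3 : min (2 * (t : ℝ)) (1/2) ≤ 1/2 := min_le_right _ _
                exact ⟨h1, by linarith⟩)).1
          · exact (inl_img_open_sat s r
              (hWo.prod ((isOpen_I_gt 0).inter (isOpen_I_lt _)))
              (fun p hp => by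
                obtain ⟨h1, h2⟩ := hp.2
                simp only [mem_setOf_eq] at h1 h2
                have h3 : min (2 * (t : ℝ)) (1/2) ≤ 1/2 := min_le_right _ _
                exact ⟨h1, by linarith⟩)).2
          · exact ⟨(e, t), ⟨heW, ⟨ht0, lt_min (by linarith) (by linarith)⟩⟩, rfl⟩
          · refine (isOpen_I_gt _).mem_nhds ?_
            show 1 - η / (2 * (t : ℝ)) < (u : ℝ)
            have hu' : (u : ℝ) = 1 := by
              rcases mul_eq_zero.mp hu1 with h | h
              · linarith
              · exfalso; linarith
            rw [hu']
            have : 0 < η / (2 * (t : ℝ)) := div_pos hη0 h2t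
            linarith
          · rintro z' ⟨⟨e', t'⟩, ⟨he'W, hwin⟩, rfl⟩ u' hu'm
            have hth' : (t' : ℝ) ≤ 1/2 :=
              le_of_lt (lt_of_lt_of_le hwin.2 (min_le_right _ _))
            rw [slide0_inl, if_pos hth']
            refine hWsub e' he'W (sldn t' u') ?_
            have hval : ((sldn t' u' : unitInterval) : ℝ) = (1 - (u' : ℝ)) * (t' : ℝ) := rfl
            have hz0 : ((0 : unitInterval) : ℝ) = 0 := rfl
            rw [hval, hz0, sub_zero,
              abs_of_nonneg (mul_nonneg (by linarith [u'.2.2]) (le_of_lt hwin.1))]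
            have hb1 : 1 - (u' : ℝ) < η / (2 * (t : ℝ)) := by
              have := hu'm; simp only [mem_setOf_eq] at this; linarith
            have hb2 : (1 - (u' : ℝ)) * (t' : ℝ) ≤ (1 - (u' : ℝ)) * (2 * (t : ℝ)) :=
              mul_le_mul_of_nonneg_left
                (le_of_lt (lt_of_lt_of_le hwin.2 (min_le_left _ _)))
                (by linarith [u'.2.2])
            have hb3 : (1 - (u' : ℝ)) * (2 * (t : ℝ)) < (η / (2 * (t : ℝ))) * (2 * (t : ℝ)) :=
              mul_lt_mul_of_pos_right hb1 h2t
            have hb4 : (η / (2 * (t : ℝ))) * (2 * (t : ℝ)) = η :=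
              div_mul_cancel₀ _ (ne_of_gt h2t)
            linarith
        · -- target strictly inside the edge
          have htt0 : 0 < (1 - (u : ℝ)) * (t : ℝ) :=
            lt_of_le_of_ne (mul_nonneg (by linarith [u.2.2]) t.2.1) (Ne.symm hu1)
          obtain ⟨W, hWo, heW, η, hη0, hWsub⟩ := rect_mem hO₀o hm'
          set θ := η / 3 with hθdef
          have hθ0 : 0 < θ := by rw [hθdef]; linarith
          refine ⟨Sum.inl '' (W ×ˢ {t' : unitInterval |
              |(t' : ℝ) - (t : ℝ)| < θ ∧ 0 < (t' : ℝ) ∧ (t' : ℝ) < 1/2}),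
            {u' : unitInterval | |(u' : ℝ) - (u : ℝ)| < θ}, ?_, ?_, ?_, ?_, ?_⟩
          · exact (inl_img_open_sat s r
              (hWo.prod ((isOpen_I_abs _ _).inter ((isOpen_I_gt 0).inter (isOpen_I_lt _))))
              (fun p hp => by
                obtain ⟨h1, h2, h3⟩ := hp.2
                simp only [mem_setOf_eq] at h1 h2 h3
                exact ⟨h2, by linarith⟩)).1
          · exact (inl_img_open_sat s r
              (hWo.prod ((isOpen_I_abs _ _).inter ((isOpen_I_gt 0).inter (isOpen_I_lt _))))
              (fun p hp => by
                obtain ⟨h1, h2, h3⟩ := hp.2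
                simp only [mem_setOf_eq] at h1 h2 h3
                exact ⟨h2, by linarith⟩)).2
          · exact ⟨(e, t), ⟨heW, ⟨by rw [sub_self, abs_zero]; exact hθ0, ht0, by linarith⟩⟩, rfl⟩
          · exact (isOpen_I_abs _ _).mem_nhds (by
              show |(u : ℝ) - (u : ℝ)| < θ
              rw [sub_self, abs_zero]; exact hθ0)
          · rintro z' ⟨⟨e', t'⟩, ⟨he'W, hwin⟩, rfl⟩ u' hu'm
            have hu'm' : |(u' : ℝ) - (u : ℝ)| < θ := hu'm
            rw [slide0_inl, if_pos (le_of_lt hwin.2.2)]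
            refine hWsub e' he'W (sldn t' u') ?_
            have e1 : ((sldn t' u' : unitInterval) : ℝ) - ((sldn t u : unitInterval) : ℝ) =
                (1 - (u' : ℝ)) * ((t' : ℝ) - (t : ℝ)) + (t : ℝ) * ((u : ℝ) - (u' : ℝ)) := by
              show (1 - (u' : ℝ)) * (t' : ℝ) - (1 - (u : ℝ)) * (t : ℝ) = _
              ring
            have b1 : |(1 - (u' : ℝ)) * ((t' : ℝ) - (t : ℝ))| ≤ |(t' : ℝ) - (t : ℝ)| := by
              rw [abs_mul]
              apply mul_le_of_le_one_left (abs_nonneg _)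
              rw [abs_of_nonneg (by linarith [u'.2.2])]
              linarith [u'.2.1]
            have b2 : |(t : ℝ) * ((u : ℝ) - (u' : ℝ))| ≤ |(u : ℝ) - (u' : ℝ)| := by
              rw [abs_mul]
              apply mul_le_of_le_one_left (abs_nonneg _)
              rw [abs_of_nonneg t.2.1]
              exact t.2.2
            calc |((sldn t' u' : unitInterval) : ℝ) - ((sldn t u : unitInterval) : ℝ)|
                = |(1 - (u' : ℝ)) * ((t' : ℝ) - (t : ℝ)) + (t : ℝ) * ((u : ℝ) - (u' : ℝ))| := by
                  rw [e1]
              _ ≤ |(1 - (u' : ℝ)) * ((t' : ℝ) - (t : ℝ))| + |(t : ℝ) * ((u : ℝ) - (u' : ℝ))| :=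
                  abs_add_le _ _
              _ ≤ |(t' : ℝ) - (t : ℝ)| + |(u : ℝ) - (u' : ℝ)| := add_le_add b1 b2
              _ < θ + θ := by
                  refine add_lt_add hwin.1 ?_
                  rw [abs_sub_comm]; exact hu'm'
              _ < η := by rw [hθdef]; linarith
    · -- TOP collar point
      have h12 : 1/2 < (t : ℝ) := by linarith
      have hth : ¬((t : ℝ) ≤ 1/2) := not_le.mpr h12
      have hsl : slide0 (E0 := E0) (Sum.inl (e, t)) u = Sum.inl (e, slup t u) := by
        rw [slide0_inl, if_neg hth]
      rw [hsl] at hm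
      have hm' : Sum.inl (e, slup t u) ∈ qm s r ⁻¹' A' := hm
      rcases lt_or_eq_of_le t.2.2 with ht1 | ht1
      · -- t < 1
        by_cases hu1 : (t : ℝ) + (u : ℝ) * (1 - (t : ℝ)) = 1
        · -- slid all the way to 1
          have h1 : slup t u = 1 := Subtype.ext hu1
          rw [h1] at hm'
          obtain ⟨W, hWo, heW, η, hη0, hWsub⟩ := rect_mem hO₀o hm'
          have h2t : 0 < 2 * (1 - (t : ℝ)) := by linarith
          refine ⟨Sum.inl '' (W ×ˢ {t' : unitInterval |
              1/2 < (t' : ℝ) ∧ 1 - 2 * (1 - (t : ℝ)) < (t' : ℝ) ∧ (t' : ℝ) < 1}),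
            {u' : unitInterval | 1 - η / (2 * (1 - (t : ℝ))) < (u' : ℝ)}, ?_, ?_, ?_, ?_, ?_⟩
          · exact (inl_img_open_sat s r
              (hWo.prod ((isOpen_I_gt _).inter ((isOpen_I_gt _).inter (isOpen_I_lt _))))
              (fun p hp => by
                obtain ⟨h1, h2, h3⟩ := hp.2
                simp only [mem_setOf_eq] at h1 h2 h3
                exact ⟨by linarith, h3⟩)).1
          · exact (inl_img_open_sat s r
              (hWo.prod ((isOpen_I_gt _).inter ((isOpen_I_gt _).inter (isOpen_I_lt _))))
              (fun p hp => by
                obtain ⟨h1, h2, h3⟩ := hp.2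
                simp only [mem_setOf_eq] at h1 h2 h3
                exact ⟨by linarith, h3⟩)).2
          · exact ⟨(e, t), ⟨heW, ⟨h12, by linarith, ht1⟩⟩, rfl⟩
          · refine (isOpen_I_gt _).mem_nhds ?_
            show 1 - η / (2 * (1 - (t : ℝ))) < (u : ℝ)
            have hu' : (u : ℝ) = 1 := by
              have hne : 1 - (t : ℝ) ≠ 0 := ne_of_gt (by linarith)
              have : (u : ℝ) * (1 - (t : ℝ)) = 1 * (1 - (t : ℝ)) := by linarith
              exact mul_right_cancel₀ hne this
            rw [hu']
            have : 0 < η / (2 * (1 - (t : ℝ))) := div_pos hη0 h2t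
            linarith
          · rintro z' ⟨⟨e', t'⟩, ⟨he'W, hwin⟩, rfl⟩ u' hu'm
            have hu'm' : 1 - η / (2 * (1 - (t : ℝ))) < (u' : ℝ) := hu'm
            rw [slide0_inl, if_neg (not_le.mpr hwin.1)]
            refine hWsub e' he'W (slup t' u') ?_
            have hval : ((slup t' u' : unitInterval) : ℝ) =
              (t' : ℝ) + (u' : ℝ) * (1 - (t' : ℝ)) := rfl
            have hz1 : ((1 : unitInterval) : ℝ) = 1 := rfl
            have hnn : ((slup t' u' : unitInterval) : ℝ) ≤ 1 := (slup t' u').2.2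
            rw [hz1, abs_sub_comm, abs_of_nonneg (by linarith)]
            have hb1 : 1 - (u' : ℝ) < η / (2 * (1 - (t : ℝ))) := by linarith
            have hb2 : (1 - (u' : ℝ)) * (1 - (t' : ℝ)) ≤ (1 - (u' : ℝ)) * (2 * (1 - (t : ℝ))) :=
              mul_le_mul_of_nonneg_left (by have := hwin.2.1; linarith)
                (by linarith [u'.2.2])
            have hb3 : (1 - (u' : ℝ)) * (2 * (1 - (t : ℝ))) <
                (η / (2 * (1 - (t : ℝ)))) * (2 * (1 - (t : ℝ))) :=
              mul_lt_mul_of_pos_right hb1 h2t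
            have hb4 : (η / (2 * (1 - (t : ℝ)))) * (2 * (1 - (t : ℝ))) = η :=
              div_mul_cancel₀ _ (ne_of_gt h2t)
            have hexp : 1 - ((t' : ℝ) + (u' : ℝ) * (1 - (t' : ℝ))) =
                (1 - (u' : ℝ)) * (1 - (t' : ℝ)) := by ring
            rw [hval, hexp]
            linarith
        · -- target strictly inside the edge
          obtain ⟨W, hWo, heW, η, hη0, hWsub⟩ := rect_mem hO₀o hm'
          set θ := η / 4 with hθdef
          have hθ0 : 0 < θ := by rw [hθdef]; linarith
          refine ⟨Sum.inl '' (W ×ˢ {t' : unitInterval |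
              |(t' : ℝ) - (t : ℝ)| < θ ∧ 1/2 < (t' : ℝ) ∧ (t' : ℝ) < 1}),
            {u' : unitInterval | |(u' : ℝ) - (u : ℝ)| < θ}, ?_, ?_, ?_, ?_, ?_⟩
          · exact (inl_img_open_sat s r
              (hWo.prod ((isOpen_I_abs _ _).inter ((isOpen_I_gt _).inter (isOpen_I_lt _))))
              (fun p hp => by
                obtain ⟨h1, h2, h3⟩ := hp.2
                simp only [mem_setOf_eq] at h1 h2 h3
                exact ⟨by linarith, h3⟩)).1
          · exact (inl_img_open_sat s r
              (hWo.prod ((isOpen_I_abs _ _).inter ((isOpen_I_gt _).inter (isOpen_I_lt _))))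
              (fun p hp => by
                obtain ⟨h1, h2, h3⟩ := hp.2
                simp only [mem_setOf_eq] at h1 h2 h3
                exact ⟨by linarith, h3⟩)).2
          · exact ⟨(e, t), ⟨heW, ⟨by rw [sub_self, abs_zero]; exact hθ0, h12, ht1⟩⟩, rfl⟩
          · exact (isOpen_I_abs _ _).mem_nhds (by
              show |(u : ℝ) - (u : ℝ)| < θ
              rw [sub_self, abs_zero]; exact hθ0)
          · rintro z' ⟨⟨e', t'⟩, ⟨he'W, hwin⟩, rfl⟩ u' hu'm
            have hu'm' : |(u' : ℝ) - (u : ℝ)| < θ := hu'm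
            rw [slide0_inl, if_neg (not_le.mpr hwin.2.1)]
            refine hWsub e' he'W (slup t' u') ?_
            have e1 : ((slup t' u' : unitInterval) : ℝ) - ((slup t u : unitInterval) : ℝ) =
                ((t' : ℝ) - (t : ℝ)) + (u' : ℝ) * ((t : ℝ) - (t' : ℝ)) +
                  ((u' : ℝ) - (u : ℝ)) * (1 - (t : ℝ)) := by
              show (t' : ℝ) + (u' : ℝ) * (1 - (t' : ℝ)) -
                ((t : ℝ) + (u : ℝ) * (1 - (t : ℝ))) = _
              ring
            have b1 : |(u' : ℝ) * ((t : ℝ) - (t' : ℝ))| ≤ |(t : ℝ) - (t' : ℝ)| := by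
              rw [abs_mul]
              apply mul_le_of_le_one_left (abs_nonneg _)
              rw [abs_of_nonneg u'.2.1]; exact u'.2.2
            have b2 : |((u' : ℝ) - (u : ℝ)) * (1 - (t : ℝ))| ≤ |(u' : ℝ) - (u : ℝ)| := by
              rw [abs_mul]
              have h1t : |1 - (t : ℝ)| ≤ 1 := by
                rw [abs_of_nonneg (by linarith [t.2.2])]
                linarith [t.2.1]
              nlinarith [abs_nonneg ((u' : ℝ) - (u : ℝ))]
            calc |((slup t' u' : unitInterval) : ℝ) - ((slup t u : unitInterval) : ℝ)|
                = |((t' : ℝ) - (t : ℝ)) + (u' : ℝ) * ((t : ℝ) - (t' : ℝ)) +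
                  ((u' : ℝ) - (u : ℝ)) * (1 - (t : ℝ))| := by rw [e1]
              _ ≤ |((t' : ℝ) - (t : ℝ)) + (u' : ℝ) * ((t : ℝ) - (t' : ℝ))| +
                  |((u' : ℝ) - (u : ℝ)) * (1 - (t : ℝ))| := abs_add_le _ _
              _ ≤ |(t' : ℝ) - (t : ℝ)| + |(u' : ℝ) * ((t : ℝ) - (t' : ℝ))| +
                  |((u' : ℝ) - (u : ℝ)) * (1 - (t : ℝ))| := by
                    have := abs_add_le ((t' : ℝ) - (t : ℝ)) ((u' : ℝ) * ((t : ℝ) - (t' : ℝ)))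
                    linarith
              _ ≤ |(t' : ℝ) - (t : ℝ)| + |(t : ℝ) - (t' : ℝ)| + |(u' : ℝ) - (u : ℝ)| := by
                    have := b1; have := b2; linarith
              _ < θ + θ + θ := by
                    have h1 := hwin.1
                    have h2 : |(t : ℝ) - (t' : ℝ)| < θ := by rw [abs_sub_comm]; exact hwin.1
                    have h3 := hu'm'
                    linarith
              _ < η := by rw [hθdef]; linarith
      · -- ↑t = 1 : vertex-like
        have h1 : slup t u = 1 := Subtype.ext (by
          show (t : ℝ) + (u : ℝ) * (1 - (t : ℝ)) = ((1 : unitInterval) : ℝ)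
          rw [show ((1 : unitInterval) : ℝ) = 1 from rfl, ht1]; ring)
        rw [h1] at hm'
        have hinr : Sum.inr (r e) ∈ qm s r ⁻¹' A' := (hO₀s e).2.mp hm'
        obtain ⟨D, δ, hDo, hwD, hδ0, hδh2, hDsub⟩ := collar s r hs hr hsf hrf hO₀s hO₀o hinr
        refine ⟨Bcol s r D δ, univ, bcol_isOpen s r hs.continuous hr.continuous hDo,
          bcol_sat s r hδ0 (by linarith), Or.inr ⟨hwD, by rw [ht1]; linarith⟩,
          univ_mem, fun z' hz' u' _ => ?_⟩
        exact hDsub (slide_stable s r hδ0 (le_of_lt hδh2) hz' u')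

end Stmt9Aux
namespace Stmt9Aux

open Set Filter Topology unitInterval

variable {E0 E1 : Type*} [TopologicalSpace E0] [TopologicalSpace E1] (s r : E1 → E0)

lemma pbar_cont (hcs : Continuous s) (hcr : Continuous r) {C : Set E0} {ε : ℝ}
    (hε0 : 0 < ε) (hεh : ε < 1/2) :
    Continuous fun n : ↥(qm s r '' Bcol s r C ε) => Pbar s r n.1 := by
  rw [continuous_iff_continuousAt]
  rintro ⟨n, hn⟩
  obtain ⟨z, hz, rfl⟩ := hn
  rw [ContinuousAt, Filter.tendsto_def]
  intro A hA
  obtain ⟨A', hA'A, hA'o, hA'm⟩ := mem_nhds_iff.mp hA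
  set m := max ε (1/4) with hm
  have hm0 : (0:ℝ) < m := lt_of_lt_of_le (by norm_num) (le_max_right _ _)
  have hmh : m < 1/2 := max_lt hεh (by norm_num)
  have hzO : z ∈ Bcol s r A' m := by
    cases z with
    | inr w => exact hA'm
    | inl p =>
      obtain ⟨e, t⟩ := p
      rcases hz with ⟨hC, ht⟩ | ⟨hC, ht⟩
      · refine Or.inl ⟨?_, lt_of_lt_of_le ht (le_max_left _ _)⟩
        have hA'm' : pbar0 s r (Sum.inl (e, t)) ∈ A' := hA'm
        have hps : pbar0 s r (Sum.inl (e, t)) = s e := if_pos (by linarith)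
        rwa [hps] at hA'm'
      · refine Or.inr ⟨?_, by have := le_max_left ε (1/4); linarith⟩
        have hA'm' : pbar0 s r (Sum.inl (e, t)) ∈ A' := hA'm
        have hps : pbar0 s r (Sum.inl (e, t)) = r e := if_neg (by intro h; linarith)
        rwa [hps] at hA'm'
  have hOsat : Sat s r (Bcol s r A' m) := bcol_sat s r hm0 (by linarith)
  have hOo : IsOpen (Bcol s r A' m) := bcol_isOpen s r hcs hcr hA'o
  have himg : IsOpen (qm s r '' Bcol s r A' m) := isOpen_image_sat s r hOsat hOo
  have hnb : Subtype.val ⁻¹' (qm s r '' Bcol s r A' m) ∈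
      𝓝 (⟨qm s r z, ⟨z, hz, rfl⟩⟩ : ↥(qm s r '' Bcol s r C ε)) :=
    continuous_subtype_val.continuousAt.preimage_mem_nhds (himg.mem_nhds ⟨z, hzO, rfl⟩)
  refine mem_of_superset hnb ?_
  rintro ⟨n', hn'⟩ hmem
  have hint : n' ∈ qm s r '' (Bcol s r A' m ∩ Bcol s r C ε) := by
    rw [← image_inter_sat s r hOsat]
    exact ⟨hmem, hn'⟩
  obtain ⟨z', ⟨hz'O, hz'P⟩, hz'q⟩ := hint
  show Pbar s r n' ∈ A
  rw [← hz'q]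
  exact hA'A (pbar_mem s r (le_of_lt hmh) hz'O)

lemma sl_cont (hs : IsCoveringMap s) (hr : IsCoveringMap r)
    (hsf : ∀ v : E0, (s ⁻¹' {v}).Finite) (hrf : ∀ v : E0, (r ⁻¹' {v}).Finite)
    {C : Set E0} {ε : ℝ} (hεh : ε < 1/2) :
    Continuous fun p : ↥(qm s r '' Bcol s r C ε) × unitInterval => Sl s r p.1.1 p.2 := by
  rw [continuous_iff_continuousAt]
  rintro ⟨⟨n, hn⟩, u⟩
  obtain ⟨z, hz, rfl⟩ := hn
  rw [ContinuousAt, Filter.tendsto_def]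
  intro A hA
  obtain ⟨A', hA'A, hA'o, hA'm⟩ := mem_nhds_iff.mp hA
  obtain ⟨O, J, hOo, hOs, hzO, hJ, hkey⟩ := sl_core s r hs hr hsf hrf hεh hz u hA'o hA'm
  have himg : IsOpen (qm s r '' O) := isOpen_image_sat s r hOs hOo
  have h1 : Subtype.val ⁻¹' (qm s r '' O) ∈
      𝓝 (⟨qm s r z, ⟨z, hz, rfl⟩⟩ : ↥(qm s r '' Bcol s r C ε)) :=
    continuous_subtype_val.continuousAt.preimage_mem_nhds (himg.mem_nhds ⟨z, hzO, rfl⟩)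
  have h2 : (Subtype.val ⁻¹' (qm s r '' O)) ×ˢ J ∈
      𝓝 ((⟨qm s r z, ⟨z, hz, rfl⟩⟩ : ↥(qm s r '' Bcol s r C ε)), u) := by
    rw [nhds_prod_eq]
    exact prod_mem_prod h1 hJ
  refine mem_of_superset h2 ?_
  rintro ⟨⟨n', hn'⟩, u'⟩ ⟨hmem, hu'⟩
  have hint : n' ∈ qm s r '' (O ∩ Bcol s r C ε) := by
    rw [← image_inter_sat s r hOs]
    exact ⟨hmem, hn'⟩
  obtain ⟨z', ⟨hz'O, _⟩, hz'q⟩ := hint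
  show Sl s r n' u' ∈ A
  rw [← hz'q]
  exact hA'A (hkey z' hz'O u' hu')

noncomputable def dbl (u : unitInterval) : unitInterval :=
  ⟨min 1 (2 * (u : ℝ)),
    ⟨le_min (by norm_num) (mul_nonneg (by norm_num) u.2.1), min_le_left _ _⟩⟩

lemma cont_dbl : Continuous dbl :=
  Continuous.subtype_mk (continuous_const.min (continuous_const.mul continuous_subtype_val)) _

noncomputable def dbl' (u : unitInterval) : unitInterval :=
  ⟨max 0 (2 * (u : ℝ) - 1), ⟨le_max_left _ _, max_le (by norm_num) (by linarith [u.2.2])⟩⟩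

lemma cont_dbl' : Continuous dbl' :=
  Continuous.subtype_mk (continuous_const.max
    ((continuous_const.mul continuous_subtype_val).sub continuous_const)) _

lemma dbl_zero : dbl 0 = 0 := Subtype.ext (by
  show min 1 (2 * ((0:unitInterval):ℝ)) = ((0:unitInterval):ℝ)
  rw [show ((0:unitInterval):ℝ) = 0 from rfl]; norm_num)

lemma dbl_half {u : unitInterval} (h : (u : ℝ) = 1/2) : dbl u = 1 := Subtype.ext (by
  show min 1 (2 * (u:ℝ)) = ((1:unitInterval):ℝ)
  rw [h, show ((1:unitInterval):ℝ) = 1 from rfl]; norm_num)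

lemma dbl'_half {u : unitInterval} (h : (u : ℝ) = 1/2) : dbl' u = 0 := Subtype.ext (by
  show max 0 (2 * (u:ℝ) - 1) = ((0:unitInterval):ℝ)
  rw [h, show ((0:unitInterval):ℝ) = 0 from rfl]; norm_num)

lemma dbl'_one : dbl' 1 = 1 := Subtype.ext (by
  show max 0 (2 * ((1:unitInterval):ℝ) - 1) = ((1:unitInterval):ℝ)
  rw [show ((1:unitInterval):ℝ) = 1 from rfl]; norm_num)

lemma caseB (hs : IsCoveringMap s) (hr : IsCoveringMap r)
    (hsf : ∀ v : E0, (s ⁻¹' {v}).Finite) (hrf : ∀ v : E0, (r ⁻¹' {v}).Finite)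
    (hE0 : LocallyContractibleSpace' E0) (v : E0) (U : Set (Quot (glueRel s r)))
    (hU : U ∈ 𝓝 (qm s r (Sum.inr v))) :
    ∃ V ∈ 𝓝 (qm s r (Sum.inr v)), V ⊆ U ∧ ContractibleSpace V := by
  classical
  obtain ⟨U₁, hU₁U, hU₁o, hU₁m⟩ := mem_nhds_iff.mp hU
  have hO₀s : Sat s r (qm s r ⁻¹' U₁) := sat_preimage s r U₁
  have hO₀o : IsOpen (qm s r ⁻¹' U₁) := hU₁o.preimage (continuous_qm s r)
  obtain ⟨D, δ, hDo, hvD, hδ0, hδh, hDsub⟩ := collar s r hs hr hsf hrf hO₀s hO₀o hU₁m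
  obtain ⟨C, hCn, hCD, hCc⟩ := hE0 v D (hDo.mem_nhds hvD)
  refine ⟨qm s r '' Bcol s r C δ, ?_, ?_, ?_⟩
  · have hsat : Sat s r (Bcol s r (interior C) δ) := bcol_sat s r hδ0 (by linarith)
    have hopen : IsOpen (Bcol s r (interior C) δ) :=
      bcol_isOpen s r hs.continuous hr.continuous isOpen_interior
    refine mem_of_superset ((isOpen_image_sat s r hsat hopen).mem_nhds
      ⟨Sum.inr v, mem_interior_iff_mem_nhds.mpr hCn, rfl⟩) ?_
    exact image_mono (bcol_mono s r interior_subset le_rfl)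
  · rintro y ⟨z, hz, rfl⟩
    exact hU₁U (hDsub (bcol_mono s r hCD le_rfl hz))
  · obtain ⟨c₀, ⟨K⟩⟩ := (contractible_iff_id_nullhomotopic ↥C).mp hCc
    set NS := qm s r '' Bcol s r C δ with hNS
    have hπval : ∀ n : ↥NS, Pbar s r n.1 ∈ C := by
      rintro ⟨n, hn⟩
      obtain ⟨z, hz, rfl⟩ := hn
      exact pbar_mem s r (le_of_lt hδh) hz
    set πm : ↥NS → ↥C := fun n => ⟨Pbar s r n.1, hπval n⟩ with hπm
    have hπc : Continuous πm :=
      (pbar_cont s r hs.continuous hr.continuous hδ0 hδh).subtype_mk _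
    set Hraw : unitInterval × ↥NS → Quot (glueRel s r) := fun p =>
      if (p.1 : ℝ) ≤ 1/2 then Sl s r p.2.1 (dbl p.1)
      else qm s r (Sum.inr ((K (dbl' p.1, πm p.2) : ↥C) : E0)) with hHraw
    have hHcont : Continuous Hraw := by
      refine Continuous.if_le ?_ ?_ (continuous_subtype_val.comp continuous_fst)
        continuous_const ?_
      · exact (sl_cont s r hs hr hsf hrf hδh).comp
          (continuous_snd.prodMk (cont_dbl.comp continuous_fst))
      · refine (continuous_qm s r).comp (continuous_inr.comp ?_)
        exact continuous_subtype_val.comp ((map_continuous K).comp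
          ((cont_dbl'.comp continuous_fst).prodMk (hπc.comp continuous_snd)))
      · rintro ⟨u, n⟩ h
        show Sl s r n.1 (dbl u) = qm s r (Sum.inr ((K (dbl' u, πm n) : ↥C) : E0))
        rw [dbl_half h, dbl'_half h, Sl_one, K.apply_zero]
        rfl
    have hmaps : ∀ p, Hraw p ∈ NS := by
      rintro ⟨u, ⟨n, hn⟩⟩
      by_cases h : (u : ℝ) ≤ 1/2
      · have hval : Hraw (u, ⟨n, hn⟩) = Sl s r n (dbl u) := by
          rw [hHraw]; exact if_pos h
        rw [hval]
        obtain ⟨z, hz, hzq⟩ := hn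
        rw [← hzq]
        exact ⟨slide0 z (dbl u), slide_stable s r hδ0 (le_of_lt hδh) hz _, rfl⟩
      · have hval : Hraw (u, ⟨n, hn⟩) =
            qm s r (Sum.inr ((K (dbl' u, πm ⟨n, hn⟩) : ↥C) : E0)) := by
          rw [hHraw]; exact if_neg h
        rw [hval]
        exact ⟨Sum.inr ((K (dbl' u, πm ⟨n, hn⟩) : ↥C) : E0), (K (dbl' u, πm ⟨n, hn⟩)).2, rfl⟩
    rw [contractible_iff_id_nullhomotopic]
    refine ⟨⟨qm s r (Sum.inr (c₀ : E0)), ⟨Sum.inr (c₀ : E0), c₀.2, rfl⟩⟩, ?_⟩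
    refine ⟨⟨⟨fun p => ⟨Hraw p, hmaps p⟩, hHcont.subtype_mk _⟩, ?_, ?_⟩⟩
    · intro x
      apply Subtype.ext
      show Hraw (0, x) = x.1
      have h0 : Hraw (0, x) = Sl s r x.1 (dbl 0) := by
        rw [hHraw]
        exact if_pos (by rw [show ((0:unitInterval):ℝ) = 0 from rfl]; norm_num)
      rw [h0, dbl_zero, Sl_zero]
    · intro x
      apply Subtype.ext
      show Hraw (1, x) = qm s r (Sum.inr (c₀ : E0))
      have h1 : Hraw (1, x) = qm s r (Sum.inr ((K (dbl' 1, πm x) : ↥C) : E0)) := by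
        rw [hHraw]
        exact if_neg (by rw [show ((1:unitInterval):ℝ) = 1 from rfl]; norm_num)
      rw [h1, dbl'_one, K.apply_one]
      rfl

end Stmt9Aux
namespace Stmt9Aux

open Set Filter Topology unitInterval

variable {E0 E1 : Type*} [TopologicalSpace E0] [TopologicalSpace E1] (s r : E1 → E0)

lemma caseA (hs : IsCoveringMap s)
    (hE0 : LocallyContractibleSpace' E0) (e : E1) (t : unitInterval)
    (ht0 : 0 < (t : ℝ)) (ht1 : (t : ℝ) < 1) (U : Set (Quot (glueRel s r)))
    (hU : U ∈ 𝓝 (qm s r (Sum.inl (e, t)))) :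
    ∃ V ∈ 𝓝 (qm s r (Sum.inl (e, t))), V ⊆ U ∧ ContractibleSpace V := by
  classical
  obtain ⟨U₁, hU₁U, hU₁o, hU₁m⟩ := mem_nhds_iff.mp hU
  obtain ⟨W, hWo, heW, η, hη0, hWsub⟩ :=
    rect_mem (hU₁o.preimage (continuous_qm s r)) (show Sum.inl (e, t) ∈ _ from hU₁m)
  obtain ⟨φ, heφ, hφeq⟩ := hs.isLocalHomeomorph e
  set W₂ := W ∩ φ.source with hW₂def
  have hW₂o : IsOpen W₂ := hWo.inter φ.open_source
  have heW₂ : e ∈ W₂ := ⟨heW, heφ⟩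
  have himg : IsOpen (φ '' W₂) := φ.isOpen_image_of_subset_source hW₂o inter_subset_right
  have hse : s e = φ e := congrFun hφeq e
  obtain ⟨C', hC'n, hC'sub, hC'c⟩ := hE0 (s e) (φ '' W₂)
    (himg.mem_nhds (by rw [hse]; exact ⟨e, heW₂, rfl⟩))
  set W' := W₂ ∩ s ⁻¹' C' with hW'def
  have hW'n : W' ∈ 𝓝 e := inter_mem (hW₂o.mem_nhds heW₂)
    (hs.continuous.continuousAt.preimage_mem_nhds hC'n)
  have hsymm : ∀ c ∈ C', φ.symm c ∈ W' ∧ s (φ.symm c) = c := by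
    intro c hc
    obtain ⟨x, hx, hxc⟩ := hC'sub hc
    have h1 : φ.symm c = x := by rw [← hxc, φ.left_inv hx.2]
    have h2 : s x = c := by rw [congrFun hφeq x, hxc]
    rw [h1]
    exact ⟨⟨hx, by rw [mem_preimage, h2]; exact hc⟩, h2⟩
  have hC'target : C' ⊆ φ.target := subset_trans hC'sub
    (by rw [← φ.image_source_eq_target]; exact image_mono inter_subset_right)
  set θ := min (η/2) (min ((t:ℝ)/2) ((1-(t:ℝ))/2)) with hθdef
  have hθ0 : 0 < θ := lt_min (by linarith) (lt_min (by linarith) (by linarith))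
  have hθη : θ ≤ η/2 := min_le_left _ _
  have hθt : θ ≤ (t:ℝ)/2 := le_trans (min_le_right _ _) (min_le_left _ _)
  have hθt1 : θ ≤ (1-(t:ℝ))/2 := le_trans (min_le_right _ _) (min_le_right _ _)
  set a := (t:ℝ) - θ with hadef
  set b := (t:ℝ) + θ with hbdef
  have ha0 : 0 < a := by rw [hadef]; linarith
  have hb1 : b < 1 := by rw [hbdef]; linarith
  have hat : a ≤ (t:ℝ) := by rw [hadef]; linarith
  have htb : (t:ℝ) ≤ b := by rw [hbdef]; linarith
  set Kset : Set unitInterval := {t' | a ≤ (t':ℝ) ∧ (t':ℝ) ≤ b} with hKdef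
  set SS : Set (E1 × unitInterval) := W' ×ˢ Kset with hSSdef
  have hmidSS : ∀ p ∈ SS, 0 < (p.2:ℝ) ∧ (p.2:ℝ) < 1 := by
    intro p hp
    obtain ⟨h1, h2⟩ := hp.2
    exact ⟨by linarith, by linarith⟩
  set Vset := qm s r '' (Sum.inl '' SS) with hVdef
  refine ⟨Vset, ?_, ?_, ?_⟩
  · -- neighborhood
    set SS' : Set (E1 × unitInterval) :=
      interior W' ×ˢ {t' : unitInterval | a < (t':ℝ) ∧ (t':ℝ) < b} with hSS'def
    have hSS'o : IsOpen SS' := isOpen_interior.prod ((isOpen_I_gt a).inter (isOpen_I_lt b))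
    have hSS'mid : ∀ p ∈ SS', 0 < (p.2:ℝ) ∧ (p.2:ℝ) < 1 := by
      intro p hp
      obtain ⟨h1, h2⟩ := hp.2
      exact ⟨by linarith, by linarith⟩
    obtain ⟨hio, hisat⟩ := inl_img_open_sat s r hSS'o hSS'mid
    have hetSS' : (e, t) ∈ SS' := by
      refine ⟨mem_interior_iff_mem_nhds.mpr hW'n, ?_, ?_⟩
      · show a < (t:ℝ)
        rw [hadef]; linarith
      · show (t:ℝ) < b
        rw [hbdef]; linarith
    refine mem_of_superset ((isOpen_image_sat s r hisat hio).mem_nhds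
      ⟨Sum.inl (e, t), ⟨(e, t), hetSS', rfl⟩, rfl⟩) ?_
    refine image_mono (image_mono ?_)
    rintro ⟨e', t'⟩ ⟨h1, h2⟩
    simp only [mem_setOf_eq] at h2
    exact ⟨interior_subset h1, ⟨le_of_lt h2.1, le_of_lt h2.2⟩⟩
  · -- inside U
    rintro y ⟨zz, ⟨p, ⟨hpW', hpK⟩, rfl⟩, rfl⟩
    refine hU₁U (hWsub p.1 hpW'.1.1 p.2 ?_)
    have h1 := hpK.1
    have h2 := hpK.2
    rw [abs_lt]
    constructor
    · rw [hadef] at h1; linarith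
    · rw [hbdef] at h2; linarith
  · -- contractible
    obtain ⟨c₀', ⟨KC⟩⟩ := (contractible_iff_id_nullhomotopic ↥C').mp hC'c
    set tmov : unitInterval → unitInterval → unitInterval := fun u t' =>
      ⟨(t':ℝ) + (u:ℝ) * ((t:ℝ) - (t':ℝ)), by
        constructor
        · nlinarith [t.2.1, t'.2.1, u.2.1, u.2.2]
        · nlinarith [t.2.2, t'.2.2, u.2.1, u.2.2]⟩ with htmov
    set g : unitInterval → XT E0 E1 → XT E0 E1 := fun u z =>
      match z with
      | Sum.inl p =>
        if hp : p ∈ SS then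
          Sum.inl (φ.symm ((KC (u, ⟨s p.1, hp.1.2⟩) : ↥C') : E0), tmov u p.2)
        else Sum.inl p
      | Sum.inr w => Sum.inr w with hgdef
    have hresp : ∀ u a' b', glueRel s r a' b' → qm s r (g u a') = qm s r (g u b') := by
      rintro u a' b' (⟨e'⟩ | ⟨e'⟩)
      · have hnot : ¬((e', (0:unitInterval)) ∈ SS) := by
          rintro ⟨_, h2⟩
          have := h2.1
          rw [show (((0:unitInterval)):ℝ) = 0 from rfl] at this
          linarith
        have : g u (Sum.inl (e', (0:unitInterval))) = Sum.inl (e', (0:unitInterval)) := by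
          show (if hp : (e', (0:unitInterval)) ∈ SS then _ else _) = _
          rw [dif_neg hnot]
        rw [this]
        exact qm_src s r e'
      · have hnot : ¬((e', (1:unitInterval)) ∈ SS) := by
          rintro ⟨_, h2⟩
          have := h2.2
          rw [show (((1:unitInterval)):ℝ) = 1 from rfl] at this
          linarith
        have : g u (Sum.inl (e', (1:unitInterval))) = Sum.inl (e', (1:unitInterval)) := by
          show (if hp : (e', (1:unitInterval)) ∈ SS then _ else _) = _
          rw [dif_neg hnot]
        rw [this]
        exact qm_rng s r e'
    set HQ : unitInterval → Quot (glueRel s r) → Quot (glueRel s r) := fun u =>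
      Quot.lift (fun z => qm s r (g u z)) (hresp u) with hHQdef
    set Gc : unitInterval × ↥SS → E1 × unitInterval := fun q =>
      (φ.symm ((KC (q.1, ⟨s q.2.1.1, q.2.2.1.2⟩) : ↥C') : E0), tmov q.1 q.2.1.2) with hGcdef
    have hvq : ∀ (u' : unitInterval) (p : E1 × unitInterval) (hp : p ∈ SS),
        HQ u' (qm s r (Sum.inl p)) = qm s r (Sum.inl (Gc (u', ⟨p, hp⟩))) := by
      intro u' p hp
      show qm s r (g u' (Sum.inl p)) = _
      have : g u' (Sum.inl p) = Sum.inl (Gc (u', ⟨p, hp⟩)) := by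
        show (if hp' : p ∈ SS then _ else _) = _
        rw [dif_pos hp]
      rw [this]
    have hGmem : ∀ (u' : unitInterval) (q : ↥SS), Gc (u', q) ∈ SS := by
      rintro u' ⟨p, hp⟩
      constructor
      · exact (hsymm _ (KC (u', ⟨s p.1, hp.1.2⟩)).2).1
      · have h1 := hp.2.1
        have h2 := hp.2.2
        constructor
        · show a ≤ (p.2:ℝ) + (u':ℝ) * ((t:ℝ) - (p.2:ℝ))
          nlinarith [u'.2.1, u'.2.2]
        · show (p.2:ℝ) + (u':ℝ) * ((t:ℝ) - (p.2:ℝ)) ≤ b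
          nlinarith [u'.2.1, u'.2.2]
    have hGc : Continuous Gc := by
      refine Continuous.prodMk ?_ ?_
      · refine ContinuousOn.comp_continuous φ.continuousOn_symm ?_
          (fun q => hC'target (KC (q.1, ⟨s q.2.1.1, q.2.2.1.2⟩)).2)
        refine continuous_subtype_val.comp ((map_continuous KC).comp ?_)
        refine continuous_fst.prodMk (Continuous.subtype_mk ?_ _)
        exact hs.continuous.comp (continuous_fst.comp (continuous_subtype_val.comp continuous_snd))
      · refine Continuous.subtype_mk ?_ _
        have h1 : Continuous fun q : unitInterval × ↥SS => ((q.2 : E1 × unitInterval).2 : ℝ) :=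
          continuous_subtype_val.comp (continuous_snd.comp
            (continuous_subtype_val.comp continuous_snd))
        have h2 : Continuous fun q : unitInterval × ↥SS => (q.1 : ℝ) :=
          continuous_subtype_val.comp continuous_fst
        exact h1.add (h2.mul (continuous_const.sub h1))
    have hHQc : Continuous fun p : unitInterval × ↥Vset => HQ p.1 p.2.1 := by
      rw [continuous_iff_continuousAt]
      rintro ⟨u, ⟨n, hn⟩⟩
      obtain ⟨zz, hzz, rfl⟩ := hn
      obtain ⟨p₀, hp₀, rfl⟩ := hzz
      rw [ContinuousAt, Filter.tendsto_def]
      intro A hA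
      obtain ⟨A', hA'A, hA'o, hA'm⟩ := mem_nhds_iff.mp hA
      have hA'm2 : Sum.inl (Gc (u, ⟨p₀, hp₀⟩)) ∈ qm s r ⁻¹' A' := by
        rw [mem_preimage, ← hvq u p₀ hp₀]
        exact hA'm
      obtain ⟨W₃, hW₃o, hGW₃, η₃, hη₃0, hW₃sub⟩ :=
        rect_mem (hA'o.preimage (continuous_qm s r)) hA'm2
      have htarg : W₃ ×ˢ {t' : unitInterval |
          |(t':ℝ) - ((Gc (u, ⟨p₀, hp₀⟩)).2 : ℝ)| < η₃} ∈ 𝓝 (Gc (u, ⟨p₀, hp₀⟩)) := by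
        refine (hW₃o.prod (isOpen_I_abs _ _)).mem_nhds ?_
        exact ⟨hGW₃, by simp only [mem_setOf_eq, sub_self, abs_zero]; exact hη₃0⟩
      have hpre := hGc.continuousAt.preimage_mem_nhds htarg
      rw [mem_nhds_prod_iff] at hpre
      obtain ⟨J, hJ, MS, hMS, hsub3⟩ := hpre
      rw [nhds_subtype_eq_comap] at hMS
      obtain ⟨M, hMn, hMsub⟩ := mem_comap.mp hMS
      set midset : Set (E1 × unitInterval) :=
        {x | 0 < (x.2:ℝ) ∧ (x.2:ℝ) < 1} with hmiddef
      have hmido : IsOpen midset := by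
        have : midset = Prod.snd ⁻¹' ({t' : unitInterval | 0 < (t':ℝ)} ∩
            {t' : unitInterval | (t':ℝ) < 1}) := rfl
        rw [this]
        exact continuous_snd.isOpen_preimage _ ((isOpen_I_gt 0).inter (isOpen_I_lt 1))
      obtain ⟨hio2, hisat2⟩ := inl_img_open_sat s r
        ((isOpen_interior (s := M)).inter hmido)
        (fun p hp => hp.2)
      have hp₀M : p₀ ∈ interior M ∩ midset :=
        ⟨mem_interior_iff_mem_nhds.mpr hMn, hmidSS p₀ hp₀⟩
      rw [nhds_prod_eq]
      refine mem_of_superset (Filter.prod_mem_prod hJ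
          (continuous_subtype_val.continuousAt.preimage_mem_nhds
            ((isOpen_image_sat s r hisat2 hio2).mem_nhds
              ⟨Sum.inl p₀, ⟨p₀, hp₀M, rfl⟩, rfl⟩))) ?_
      rintro ⟨u', ⟨n'', hn''⟩⟩ ⟨hu'J, hmem2⟩
      have hint : n'' ∈ qm s r '' (Sum.inl '' (interior M ∩ midset) ∩ Sum.inl '' SS) := by
        rw [← image_inter_sat s r hisat2]
        exact ⟨hmem2, hn''⟩
      obtain ⟨zz', ⟨hz1, hz2⟩, rfl⟩ := hint
      obtain ⟨p', hp'M, rfl⟩ := hz1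
      have hp'SS : p' ∈ SS := by
        obtain ⟨p'', hp'', heq⟩ := hz2
        rwa [← Sum.inl_injective heq]
      show HQ u' (qm s r (Sum.inl p')) ∈ A
      rw [hvq u' p' hp'SS]
      refine hA'A ?_
      have hp'M2 : (⟨p', hp'SS⟩ : ↥SS) ∈ Subtype.val ⁻¹' M := by
        rw [mem_preimage]
        exact interior_subset hp'M.1
      have hin : (u', (⟨p', hp'SS⟩ : ↥SS)) ∈ J ×ˢ MS := ⟨hu'J, hMsub hp'M2⟩
      have hw3 := hsub3 hin
      have hfin := hW₃sub (Gc (u', ⟨p', hp'SS⟩)).1 hw3.1 (Gc (u', ⟨p', hp'SS⟩)).2 hw3.2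
      exact hfin
    have hHQmem : ∀ (u' : unitInterval) (n : ↥Vset), HQ u' n.1 ∈ Vset := by
      rintro u' ⟨n, hn⟩
      obtain ⟨zz, ⟨p, hp, rfl⟩, rfl⟩ := hn
      rw [hvq u' p hp]
      exact ⟨Sum.inl (Gc (u', ⟨p, hp⟩)), ⟨Gc (u', ⟨p, hp⟩), hGmem u' ⟨p, hp⟩, rfl⟩, rfl⟩
    rw [contractible_iff_id_nullhomotopic]
    have hptmem : Sum.inl (φ.symm ((c₀' : ↥C') : E0), t) ∈ (Sum.inl '' SS : Set (XT E0 E1)) :=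
      ⟨(φ.symm ((c₀' : ↥C') : E0), t), ⟨(hsymm _ c₀'.2).1, ⟨hat, htb⟩⟩, rfl⟩
    refine ⟨⟨qm s r (Sum.inl (φ.symm ((c₀' : ↥C') : E0), t)), ⟨_, hptmem, rfl⟩⟩, ?_⟩
    refine ⟨⟨⟨fun p => ⟨HQ p.1 p.2.1, hHQmem p.1 p.2⟩, hHQc.subtype_mk _⟩, ?_, ?_⟩⟩
    · rintro ⟨x, hx⟩
      apply Subtype.ext
      show HQ 0 x = x
      obtain ⟨zz, ⟨p, hp, rfl⟩, rfl⟩ := hx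
      rw [hvq 0 p hp]
      have hGc0 : Gc (0, ⟨p, hp⟩) = p := by
        have h1 : ((KC (0, ⟨s p.1, hp.1.2⟩) : ↥C') : E0) = s p.1 := by
          rw [KC.apply_zero]; rfl
        have h2 : tmov 0 p.2 = p.2 := Subtype.ext (by
          show (p.2:ℝ) + ((0:unitInterval):ℝ) * ((t:ℝ) - (p.2:ℝ)) = (p.2:ℝ)
          rw [show ((0:unitInterval):ℝ) = 0 from rfl]; ring)
        refine Prod.ext ?_ ?_
        · show φ.symm ((KC (0, ⟨s p.1, hp.1.2⟩) : ↥C') : E0) = p.1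
          rw [h1, show s p.1 = φ p.1 from congrFun hφeq p.1]
          exact φ.left_inv hp.1.1.2
        · exact h2
      rw [hGc0]
    · rintro ⟨x, hx⟩
      apply Subtype.ext
      show HQ 1 x = qm s r (Sum.inl (φ.symm ((c₀' : ↥C') : E0), t))
      obtain ⟨zz, ⟨p, hp, rfl⟩, rfl⟩ := hx
      rw [hvq 1 p hp]
      have hGc1 : Gc (1, ⟨p, hp⟩) = (φ.symm ((c₀' : ↥C') : E0), t) := by
        have h1 : ((KC (1, ⟨s p.1, hp.1.2⟩) : ↥C') : E0) = ((c₀' : ↥C') : E0) := by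
          rw [KC.apply_one]; rfl
        have h2 : tmov 1 p.2 = t := Subtype.ext (by
          show (p.2:ℝ) + ((1:unitInterval):ℝ) * ((t:ℝ) - (p.2:ℝ)) = (t:ℝ)
          rw [show ((1:unitInterval):ℝ) = 1 from rfl]; ring)
        refine Prod.ext ?_ h2
        show φ.symm ((KC (1, ⟨s p.1, hp.1.2⟩) : ↥C') : E0) = φ.symm ((c₀' : ↥C') : E0)
        rw [h1]
      rw [hGc1]

end Stmt9Aux
open Stmt9Aux in
/-- If `E` is a topological graph in which both `r, s : E¹ → E⁰` are
finite-to-one covering maps and `E⁰` is locally contractible, then the geometric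
realization `R(E)` (the double mapping torus obtained from `E¹ × [0,1] ⊔ E⁰` by
identifying `(e,0) ∼ s e` and `(e,1) ∼ r e`) is locally contractible. -/
theorem stmt9 {E0 E1 : Type*} [TopologicalSpace E0] [TopologicalSpace E1]
    [T2Space E0] [T2Space E1] [LocallyCompactSpace E0] [LocallyCompactSpace E1]
    (s r : E1 → E0)
    (hs : IsCoveringMap s) (hr : IsCoveringMap r)
    (hsf : ∀ v : E0, (s ⁻¹' {v}).Finite) (hrf : ∀ v : E0, (r ⁻¹' {v}).Finite)
    (hE0 : LocallyContractibleSpace' E0) :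
    LocallyContractibleSpace' (Quot (glueRel s r)) := by
  intro x U hU
  obtain ⟨z, rfl⟩ := Quot.exists_rep x
  cases z with
  | inr v => exact caseB s r hs hr hsf hrf hE0 v U hU
  | inl p =>
    obtain ⟨e, t⟩ := p
    rcases eq_or_lt_of_le t.2.1 with h0 | h0
    · have heq : Quot.mk (glueRel s r) (Sum.inl (e, t)) = qm s r (Sum.inr (s e)) := by
        have ht : t = 0 := Subtype.ext h0.symm
        rw [ht]
        exact qm_src s r e
      rw [heq] at hU ⊢
      exact caseB s r hs hr hsf hrf hE0 (s e) U hU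
    · rcases lt_or_eq_of_le t.2.2 with h1 | h1
      · exact caseA s r hs hE0 e t h0 h1 U hU
      · have heq : Quot.mk (glueRel s r) (Sum.inl (e, t)) = qm s r (Sum.inr (r e)) := by
          have ht : t = 1 := Subtype.ext h1
          rw [ht]
          exact qm_rng s r e
        rw [heq] at hU ⊢
        exact caseB s r hs hr hsf hrf hE0 (r e) U hU
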